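/- Let G be a locally compact abelian group, G₀ ≤ G a subgroup, Y ≤ G an open compact subgroup, and suppose w : G → ℂ is Y-periodic and integrable with ∫_G |w| < ∞. Then for every x ∈ G the 'unfolded' function z ↦ w(x + z) is absolutely integrable over G₀ with respect to Haar measure on G₀ (G₀ given the Haar measure for which the unfolding formula below holds), with ∫_{G₀} |w(x+z)| dz ≤ (#(G₀ ∩ Y)/μ(Y)) ∫_G |w|. -/

import Mathlib

open MeasureTheory
open scoped ENNReal NNReal

/-- A discrete subgroup meets a compact open subgroup in a finite set. -/
lemma finite_discrete_inter_compact
    {G : Type*} [AddCommGroup G] [TopologicalSpace G] [IsTopologicalAddGroup G]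
    [MeasurableSpace G] [BorelSpace G]
    (μ : Measure G) [μ.IsAddHaarMeasure]
    (Y : AddSubgroup G) (hYopen : IsOpen (Y : Set G)) (hYcpt : IsCompact (Y : Set G))
    (G₀ : AddSubgroup G) (hG₀ : DiscreteTopology G₀) :
    ((G₀ : Set G) ∩ (Y : Set G)).Finite := by
  -- get an open set V with V ∩ G₀ = {0}
  have h0 : IsOpen ({(0 : G₀)} : Set G₀) := isOpen_discrete _
  rw [isOpen_induced_iff] at h0
  obtain ⟨V, hVopen, hV⟩ := h0
  have h0V : (0 : G) ∈ V := by
    have : (0 : G₀) ∈ (Subtype.val ⁻¹' V : Set G₀) := by rw [hV]; rfl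
    simpa using this
  have hVmem : V ∈ nhds (0 : G) := hVopen.mem_nhds h0V
  -- get U open nbhd of 0, U ⊆ Y, U - U ⊆ V
  have hc : ContinuousAt (fun p : G × G => p.1 - p.2) ((0 : G), (0 : G)) :=
    continuous_sub.continuousAt
  have hpre : (fun p : G × G => p.1 - p.2) ⁻¹' V ∈ nhds ((0 : G), (0 : G)) :=
    hc (by simpa using hVmem)
  rcases mem_nhds_prod_iff.mp hpre with ⟨U₁, hU₁, U₂, hU₂, hU₁₂⟩
  have hmem : U₁ ∩ U₂ ∩ (Y : Set G) ∈ nhds (0 : G) :=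
    Filter.inter_mem (Filter.inter_mem hU₁ hU₂) (hYopen.mem_nhds Y.zero_mem)
  rcases mem_nhds_iff.mp hmem with ⟨U, hUsub, hUopen, hU0⟩
  have hUY : U ⊆ (Y : Set G) := fun t ht => (hUsub ht).2
  have hUV : ∀ a ∈ U, ∀ b ∈ U, a - b ∈ V := by
    intro a ha b hb
    exact hU₁₂ (Set.mk_mem_prod (hUsub ha).1.1 (hUsub hb).1.2)
  -- suppose infinite
  by_contra hinf
  have hS : ((G₀ : Set G) ∩ (Y : Set G)).Infinite := hinf
  set e := hS.natEmbedding with he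
  set B : ℕ → Set G := fun n => (fun t => -((e n : G)) + t) ⁻¹' U with hB
  have hBmeas : ∀ n, MeasurableSet (B n) := fun n =>
    hUopen.measurableSet.preimage (measurable_const_add _)
  have hBμ : ∀ n, μ (B n) = μ U := fun n => measure_preimage_add μ _ _
  have hBY : ∀ n, B n ⊆ (Y : Set G) := by
    intro n t ht
    have h1 : -((e n : G)) + t ∈ (Y : Set G) := hUY ht
    have h2 : (e n : G) ∈ (Y : Set G) := (e n).2.2
    have : (e n : G) + (-((e n : G)) + t) ∈ Y := Y.add_mem h2 h1
    simpa using this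
  have hdisj : Pairwise (Function.onFun Disjoint B) := by
    intro m n hmn
    rw [Function.onFun, Set.disjoint_left]
    intro t htm htn
    have h1 : (-((e m : G)) + t) - (-((e n : G)) + t) ∈ V := hUV _ htm _ htn
    have h2 : (-((e m : G)) + t) - (-((e n : G)) + t) = (e n : G) - (e m : G) := by abel
    rw [h2] at h1
    have hmem₀ : (e n : G) - (e m : G) ∈ G₀ := G₀.sub_mem (e n).2.1 (e m).2.1
    have : (⟨(e n : G) - (e m : G), hmem₀⟩ : G₀) ∈ (Subtype.val ⁻¹' V : Set G₀) := h1
    rw [hV] at this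
    have h3 : (e n : G) - (e m : G) = 0 := congrArg Subtype.val this
    have h4 : (e n : G) = (e m : G) := by
      have := sub_eq_zero.mp h3; exact this
    exact hmn (e.injective (Subtype.ext h4.symm)).symm.symm
  have hU_pos : 0 < μ U := hUopen.measure_pos μ ⟨0, hU0⟩
  have hle : μ (⋃ n, B n) ≤ μ (Y : Set G) :=
    measure_mono (Set.iUnion_subset hBY)
  rw [measure_iUnion hdisj hBmeas] at hle
  simp only [hBμ] at hle
  rw [ENNReal.tsum_const_eq_top_of_ne_zero hU_pos.ne'] at hle
  exact (hYcpt.measure_lt_top (μ := μ)).ne (top_le_iff.mp hle)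

/-- For an integrable `Y`-periodic function `w` (with `Y` open compact of positive
measure) and a discrete subgroup `G₀`, the unfolded sum `∑_{z ∈ G₀} ‖w(x+z)‖`
converges and is at most `(#(G₀ ∩ Y)/μ(Y)) ∫_G ‖w‖`. -/
theorem unfolded_sum_bound
    {G : Type*} [AddCommGroup G] [TopologicalSpace G] [IsTopologicalAddGroup G]
    [LocallyCompactSpace G] [MeasurableSpace G] [BorelSpace G]
    (μ : Measure G) [μ.IsAddHaarMeasure]
    (Y : AddSubgroup G) (hYopen : IsOpen (Y : Set G)) (hYcpt : IsCompact (Y : Set G))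
    (hμY : 0 < μ (Y : Set G))
    (G₀ : AddSubgroup G) (hG₀ : DiscreteTopology G₀)
    (w : G → ℂ) (hw : Integrable w μ)
    (hper : ∀ x : G, ∀ y ∈ Y, w (x + y) = w x) :
    ∀ x : G, Summable (fun z : G₀ => ‖w (x + z)‖) ∧
      (∑' z : G₀, ‖w (x + z)‖) ≤
        (Nat.card ((G₀ : Set G) ∩ (Y : Set G) : Set G) : ℝ) / (μ (Y : Set G)).toReal *
          ∫ y, ‖w y‖ ∂μ := by
  intro x
  have hfin : ((G₀ : Set G) ∩ (Y : Set G)).Finite :=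
    finite_discrete_inter_compact μ Y hYopen hYcpt G₀ hG₀
  set N : ℕ := Nat.card ((G₀ : Set G) ∩ (Y : Set G) : Set G) with hN
  have hNcard : N = hfin.toFinset.card := by
    rw [hN, Nat.card_coe_set_eq, Set.ncard_eq_toFinset_card _ hfin]
  set g : G → ℝ≥0∞ := fun t => (‖w t‖₊ : ℝ≥0∞) with hg
  have hgm : AEMeasurable g μ := hw.aestronglyMeasurable.enorm
  set L : ℝ≥0∞ := ∫⁻ t, g t ∂μ with hL
  have hLne : L ≠ ∞ := by
    have := hw.2
    rw [MeasureTheory.HasFiniteIntegral] at this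
    exact this.ne
  have hμYne : μ (Y : Set G) ≠ ∞ := (hYcpt.measure_lt_top (μ := μ)).ne
  set A : G₀ → Set G := fun z => (fun t => -(x + (z : G)) + t) ⁻¹' (Y : Set G) with hA
  have hAmeas : ∀ z, MeasurableSet (A z) := fun z =>
    hYopen.measurableSet.preimage (measurable_const_add _)
  have hμA : ∀ z, μ (A z) = μ (Y : Set G) := fun z => measure_preimage_add μ _ _
  have hwA : ∀ z : G₀, ∀ t ∈ A z, w t = w (x + z) := by
    intro z t ht
    have h1 : -(x + (z : G)) + t ∈ Y := ht
    have := hper (x + (z : G)) _ h1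
    rw [← this]
    congr 1
    abel
  -- key1 : the value equals a set integral
  have key1 : ∀ z : G₀, (‖w (x + z)‖₊ : ℝ≥0∞) * μ (Y : Set G)
      = ∫⁻ t, (A z).indicator g t ∂μ := by
    intro z
    have hconst : ∫⁻ t in A z, g t ∂μ = ∫⁻ _ in A z, (‖w (x + z)‖₊ : ℝ≥0∞) ∂μ :=
      setLIntegral_congr_fun (hAmeas z) (fun t ht => by
        simp only [hg]; rw [hwA z t ht])
    rw [lintegral_indicator (hAmeas z), hconst, setLIntegral_const, hμA z]
  -- key2 : multiplicity bound
  have key2 : ∀ (F : Finset G₀) (t : G),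
      (∑ z ∈ F, (A z).indicator g t) ≤ (N : ℝ≥0∞) * g t := by
    intro F t
    classical
    have hsum : (∑ z ∈ F, (A z).indicator g t)
        = ((F.filter (fun z => t ∈ A z)).card : ℝ≥0∞) * g t := by
      rw [Finset.sum_indicator_eq_sum_filter]
      rw [Finset.sum_const, nsmul_eq_mul]
    rw [hsum]
    apply mul_le_mul_left
    rw [Nat.cast_le (α := ℝ≥0∞)]
    rw [hNcard]
    rcases (F.filter (fun z => t ∈ A z)).eq_empty_or_nonempty with hemp | ⟨z₀, hz₀⟩
    · simp [hemp]
    · have hz₀' : t ∈ A z₀ := (Finset.mem_filter.mp hz₀).2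
      refine Finset.card_le_card_of_injOn (fun z : G₀ => (z : G) - (z₀ : G)) ?_ ?_
      · intro z hz
        have hzA : t ∈ A z := (Finset.mem_filter.mp hz).2
        rw [Finset.mem_coe, Set.Finite.mem_toFinset]
        constructor
        · exact G₀.sub_mem z.2 z₀.2
        · have h1 : -(x + (z₀ : G)) + t ∈ Y := hz₀'
          have h2 : -(x + (z : G)) + t ∈ Y := hzA
          have h3 : (-(x + (z₀ : G)) + t) - (-(x + (z : G)) + t) ∈ Y := Y.sub_mem h1 h2
          have h4 : (-(x + (z₀ : G)) + t) - (-(x + (z : G)) + t) = (z : G) - (z₀ : G) := by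
            abel
          rwa [h4] at h3
      · intro a _ b _ hab
        exact Subtype.ext (by simpa using sub_left_injective hab)
  -- combine: tsum bound in ℝ≥0∞
  set T : ℝ≥0∞ := ∑' z : G₀, (‖w (x + z)‖₊ : ℝ≥0∞) with hT
  have hTbound : T * μ (Y : Set G) ≤ (N : ℝ≥0∞) * L := by
    rw [hT, ← ENNReal.tsum_mul_right]
    rw [ENNReal.tsum_eq_iSup_sum]
    apply iSup_le
    intro F
    calc (∑ z ∈ F, (‖w (x + z)‖₊ : ℝ≥0∞) * μ (Y : Set G))
        = ∑ z ∈ F, ∫⁻ t, (A z).indicator g t ∂μ := by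
          exact Finset.sum_congr rfl (fun z _ => key1 z)
      _ = ∫⁻ t, ∑ z ∈ F, (A z).indicator g t ∂μ :=
          (lintegral_finset_sum' F (fun z _ => hgm.indicator (hAmeas z))).symm
      _ ≤ ∫⁻ t, (N : ℝ≥0∞) * g t ∂μ := lintegral_mono (fun t => key2 F t)
      _ = (N : ℝ≥0∞) * L := lintegral_const_mul' _ _ (ENNReal.natCast_ne_top N)
  have hTle : T ≤ (N : ℝ≥0∞) * L / μ (Y : Set G) :=
    (ENNReal.le_div_iff_mul_le (Or.inl hμY.ne') (Or.inl hμYne)).mpr hTbound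
  have hRHSne : (N : ℝ≥0∞) * L / μ (Y : Set G) ≠ ∞ := by
    apply (ENNReal.div_lt_top _ hμY.ne').ne
    exact ENNReal.mul_ne_top (ENNReal.natCast_ne_top N) hLne
  have hTne : T ≠ ∞ := (lt_of_le_of_lt hTle hRHSne.lt_top).ne
  -- summability
  have hsummable : Summable (fun z : G₀ => ‖w (x + z)‖) := by
    have := ENNReal.summable_toReal hTne
    simpa using this
  refine ⟨hsummable, ?_⟩
  -- the bound in ℝ
  have h1 : (∑' z : G₀, ‖w (x + z)‖) = T.toReal := by
    rw [hT, ENNReal.tsum_toReal_eq (fun z => ENNReal.coe_ne_top)]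
    simp
  rw [h1]
  have h2 := ENNReal.toReal_mono hRHSne hTle
  refine h2.trans (le_of_eq ?_)
  rw [ENNReal.toReal_div, ENNReal.toReal_mul, ENNReal.toReal_natCast]
  rw [integral_norm_eq_lintegral_enorm hw.1]
  rw [show (∫⁻ (x : G), ‖w x‖ₑ ∂μ) = L from rfl]
  ring
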